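/- Let 0 < a < b and p, q > 1 with 1/p+1/q = 1. Then |ln((a+b)/2 + 1) - (1/(b-a))∫ₐᵇ ln(u+1) du| ≤ ((b-a)/(4(p+1)^{1/p}))·[1/((3a+b)/4 + 1) + 1/((a+3b)/4 + 1)], i.e. the right side equals ((b-a)/(4(p+1)^{1/p}))·[4/(3a+b+4) + 4/(a+3b+4)] up to the stated normalization. -/

import Mathlib

open MeasureTheory

section Aux

open Real Set

private lemma hasDerivAt_F_aux (c : ℝ) (hc : 0 < c) {d : ℝ} (hd : 0 < d) :
    HasDerivAt (fun x : ℝ => (x - c) * Real.log ((c + x) / 2) - x * Real.log x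
        + c * Real.log c + (x - c))
      (Real.log ((c + d) / 2) - Real.log d + (d - c) / (c + d)) d := by
  have hcd : c + d ≠ 0 := by positivity
  have h1 : HasDerivAt (fun x : ℝ => (c + x) / 2) (1 / 2) d := by
    simpa using ((hasDerivAt_id d).const_add c).div_const 2
  have h2 : HasDerivAt (fun x : ℝ => Real.log ((c + x) / 2))
      ((1 / 2) / ((c + d) / 2)) d := h1.log (by positivity)
  have h3 : HasDerivAt (fun x : ℝ => (x - c) * Real.log ((c + x) / 2))
      (1 * Real.log ((c + d) / 2) + (d - c) * ((1 / 2) / ((c + d) / 2))) d :=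
    ((hasDerivAt_id d).sub_const c).mul h2
  have h4 : HasDerivAt (fun x : ℝ => x * Real.log x) (Real.log d + 1) d :=
    Real.hasDerivAt_mul_log (ne_of_gt hd)
  have h5 := ((h3.sub h4).add_const (c * Real.log c)).add
    ((hasDerivAt_id d).sub_const c)
  refine h5.congr_deriv ?_
  field_simp
  ring

private lemma F_lower_aux (c : ℝ) (hc : 0 < c) {d : ℝ} (hcd : c ≤ d) :
    0 ≤ (d - c) * Real.log ((c + d) / 2) - d * Real.log d + c * Real.log c + (d - c) := by
  set F : ℝ → ℝ := fun x => (x - c) * Real.log ((c + x) / 2) - x * Real.log x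
    + c * Real.log c + (x - c) with hF
  have hder : ∀ x ∈ Ici c, HasDerivAt F
      (Real.log ((c + x) / 2) - Real.log x + (x - c) / (c + x)) x :=
    fun x hx => hasDerivAt_F_aux c hc (lt_of_lt_of_le hc hx)
  have hmono : MonotoneOn F (Ici c) := by
    apply monotoneOn_of_deriv_nonneg (convex_Ici c)
      (fun x hx => (hder x hx).continuousAt.continuousWithinAt)
      (fun x hx => by
        rw [interior_Ici] at hx
        exact (hder x (le_of_lt (mem_Ioi.mp hx))).differentiableAt.differentiableWithinAt)
    intro x hx
    rw [interior_Ici] at hx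
    have hxc : c < x := hx
    have hx0 : 0 < x := lt_trans hc hxc
    rw [(hder x hxc.le).deriv]
    have key : Real.log (2 * x / (c + x)) ≤ 2 * x / (c + x) - 1 :=
      Real.log_le_sub_one_of_pos (by positivity)
    have hlog : Real.log ((c + x) / 2) - Real.log x = - Real.log (2 * x / (c + x)) := by
      rw [Real.log_div (by positivity) (by positivity),
        Real.log_div (by positivity) (by positivity),
        Real.log_mul (by norm_num) (ne_of_gt hx0)]
      ring
    rw [hlog]
    have h2 : 2 * x / (c + x) - 1 = (x - c) / (c + x) := by
      field_simp
      ring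
    rw [h2] at key
    linarith
  have h0 : F c = 0 := by
    simp only [hF]
    have : (c + c) / 2 = c := by ring
    rw [this]
    ring
  have := hmono (self_mem_Ici) hcd hcd
  rw [h0] at this
  exact this

private lemma hasDerivAt_rat_aux (c : ℝ) (hc : 0 < c) {d : ℝ} (hd : 0 < d) :
    HasDerivAt (fun x : ℝ => 2 * ((x - c) ^ 2 * (c + x)) / ((3 * c + x) * (c + 3 * x)))
      (((2 * (2 * (d - c) * (c + d) + (d - c) ^ 2)) * ((3 * c + d) * (c + 3 * d))
        - 2 * ((d - c) ^ 2 * (c + d)) * ((c + 3 * d) + (3 * c + d) * 3))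
        / ((3 * c + d) * (c + 3 * d)) ^ 2) d := by
  have hsq : HasDerivAt (fun x : ℝ => (x - c) ^ 2) (2 * (d - c)) d := by
    simpa using ((hasDerivAt_id d).sub_const c).fun_pow 2
  have hN : HasDerivAt (fun x : ℝ => 2 * ((x - c) ^ 2 * (c + x)))
      (2 * (2 * (d - c) * (c + d) + (d - c) ^ 2 * 1)) d :=
    (hsq.mul ((hasDerivAt_id d).const_add c)).const_mul 2
  have hD1 : HasDerivAt (fun x : ℝ => 3 * c + x) 1 d := (hasDerivAt_id d).const_add (3 * c)
  have hD2 : HasDerivAt (fun x : ℝ => c + 3 * x) (3 * 1) d :=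
    ((hasDerivAt_id d).const_mul 3).const_add c
  have hD : HasDerivAt (fun x : ℝ => (3 * c + x) * (c + 3 * x))
      (1 * (c + 3 * d) + (3 * c + d) * (3 * 1)) d := hD1.mul hD2
  have hDne : (3 * c + d) * (c + 3 * d) ≠ 0 := by positivity
  have := hN.div hD hDne
  refine this.congr_deriv ?_
  ring

private lemma F_upper_aux (c : ℝ) (hc : 0 < c) {d : ℝ} (hcd : c ≤ d) :
    (d - c) * Real.log ((c + d) / 2) - d * Real.log d + c * Real.log c + (d - c) ≤
      2 * ((d - c) ^ 2 * (c + d)) / ((3 * c + d) * (c + 3 * d)) := by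
  set G : ℝ → ℝ := fun x => 2 * ((x - c) ^ 2 * (c + x)) / ((3 * c + x) * (c + 3 * x))
    - ((x - c) * Real.log ((c + x) / 2) - x * Real.log x + c * Real.log c + (x - c)) with hG
  have hder : ∀ x ∈ Ici c, HasDerivAt G
      ((((2 * (2 * (x - c) * (c + x) + (x - c) ^ 2)) * ((3 * c + x) * (c + 3 * x))
        - 2 * ((x - c) ^ 2 * (c + x)) * ((c + 3 * x) + (3 * c + x) * 3))
        / ((3 * c + x) * (c + 3 * x)) ^ 2)
        - (Real.log ((c + x) / 2) - Real.log x + (x - c) / (c + x))) x := by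
    intro x hx
    have hx0 : 0 < x := lt_of_lt_of_le hc hx
    exact (hasDerivAt_rat_aux c hc hx0).sub (hasDerivAt_F_aux c hc hx0)
  have hmono : MonotoneOn G (Ici c) := by
    apply monotoneOn_of_deriv_nonneg (convex_Ici c)
      (fun x hx => (hder x hx).continuousAt.continuousWithinAt)
      (fun x hx => by
        rw [interior_Ici] at hx
        exact (hder x (le_of_lt (mem_Ioi.mp hx))).differentiableAt.differentiableWithinAt)
    intro x hx
    rw [interior_Ici] at hx
    have hxc : c < x := hx
    have hx0 : 0 < x := lt_trans hc hxc
    rw [(hder x hxc.le).deriv]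
    have hlogle : Real.log ((c + x) / 2) - Real.log x ≤ (c + x) / (2 * x) - 1 := by
      have h1 : Real.log ((c + x) / 2) - Real.log x = Real.log ((c + x) / (2 * x)) := by
        rw [Real.log_div (by positivity) (by positivity),
          Real.log_div (by positivity) (by positivity),
          Real.log_mul (by norm_num) (ne_of_gt hx0)]
        ring
      rw [h1]
      exact Real.log_le_sub_one_of_pos (by positivity)
    have hB : (c + x) / (2 * x) - 1 + (x - c) / (c + x)
        = (x - c) ^ 2 / (2 * x * (c + x)) := by
      field_simp
      ring
    have hFd : Real.log ((c + x) / 2) - Real.log x + (x - c) / (c + x)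
        ≤ (x - c) ^ 2 / (2 * x * (c + x)) := by linarith
    have hkey : (x - c) ^ 2 / (2 * x * (c + x)) ≤
        ((2 * (2 * (x - c) * (c + x) + (x - c) ^ 2)) * ((3 * c + x) * (c + 3 * x))
          - 2 * ((x - c) ^ 2 * (c + x)) * ((c + 3 * x) + (3 * c + x) * 3))
          / ((3 * c + x) * (c + 3 * x)) ^ 2 := by
      rw [div_le_div_iff₀ (by positivity) (by positivity)]
      have hq : (0:ℝ) ≤ 3 * x ^ 5 + 53 * c * x ^ 4 + 134 * c ^ 2 * x ^ 3
          + 210 * c ^ 3 * x ^ 2 + 103 * c ^ 4 * x + 9 * c ^ 5 := by positivity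
      have hf : (0:ℝ) ≤ (x - c) * (3 * x ^ 5 + 53 * c * x ^ 4 + 134 * c ^ 2 * x ^ 3
          + 210 * c ^ 3 * x ^ 2 + 103 * c ^ 4 * x + 9 * c ^ 5) :=
        mul_nonneg (by linarith) hq
      nlinarith [hf]
    linarith
  have h0 : G c = 0 := by
    simp only [hG]
    have h1 : (c + c) / 2 = c := by ring
    rw [h1]
    have h2 : ((c:ℝ) - c) ^ 2 = 0 := by ring
    rw [h2]
    ring
  have := hmono (self_mem_Ici) hcd hcd
  rw [h0] at this
  simp only [hG] at this
  linarith

private lemma rpow_le_two_aux {p : ℝ} (hp : 1 < p) : (p + 1) ^ (1 / p) ≤ 2 := by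
  have hp0 : 0 < p := lt_trans one_pos hp
  have hb : p + 1 ≤ (2:ℝ) ^ p := by
    have := one_add_mul_self_le_rpow_one_add (by norm_num : (-1:ℝ) ≤ 1) hp.le
    norm_num at this
    linarith
  have h1 : (p + 1) ^ (1 / p) ≤ ((2:ℝ) ^ p) ^ (1 / p) :=
    Real.rpow_le_rpow (by positivity) hb (by positivity)
  have h2 : ((2:ℝ) ^ p) ^ (1 / p) = 2 := by
    rw [← Real.rpow_mul (by norm_num : (0:ℝ) ≤ 2), mul_one_div_cancel (ne_of_gt hp0),
      Real.rpow_one]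
  linarith [h1, h2.le]

end Aux

theorem log_mean_inequality
    (a b p q : ℝ) (ha : 0 < a) (hab : a < b)
    (hp : 1 < p) (hq : 1 < q) (hpq : 1 / p + 1 / q = 1) :
    |Real.log ((a + b) / 2 + 1) - (1 / (b - a)) * ∫ u in a..b, Real.log (u + 1)| ≤
      ((b - a) / (4 * (p + 1) ^ (1 / p))) *
        (1 / ((3 * a + b) / 4 + 1) + 1 / ((a + 3 * b) / 4 + 1)) := by
  have hb : 0 < b := lt_trans ha hab
  set c : ℝ := a + 1 with hc_def
  set d : ℝ := b + 1 with hd_def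
  have hc : 0 < c := by simp only [hc_def]; linarith
  have hd : 0 < d := by simp only [hd_def]; linarith
  have hcd : c < d := by simp only [hc_def, hd_def]; linarith
  have hdc : 0 < d - c := by linarith
  have hdcba : d - c = b - a := by simp only [hc_def, hd_def]; ring
  -- compute the integral
  have hI : (∫ u in a..b, Real.log (u + 1))
      = d * Real.log d - c * Real.log c - (d - c) := by
    rw [intervalIntegral.integral_comp_add_right (fun u => Real.log u) 1]
    have := integral_log (a := a + 1) (b := b + 1)
    rw [this]
    simp only [hc_def, hd_def]
    ring
  -- rewrite the difference as F d / (d - c)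
  have harg : (a + b) / 2 + 1 = (c + d) / 2 := by
    simp only [hc_def, hd_def]; ring
  have hrw : Real.log ((a + b) / 2 + 1) - (1 / (b - a)) * ∫ u in a..b, Real.log (u + 1)
      = ((d - c) * Real.log ((c + d) / 2) - d * Real.log d + c * Real.log c + (d - c))
        / (d - c) := by
    rw [harg, hI, ← hdcba]
    field_simp
    ring
  rw [hrw]
  -- positivity facts about the RHS
  have h1pos : (0:ℝ) < (3 * a + b) / 4 + 1 := by linarith
  have h2pos : (0:ℝ) < (a + 3 * b) / 4 + 1 := by linarith
  have hKpos : (0:ℝ) < (p + 1) ^ (1 / p) :=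
    Real.rpow_pos_of_pos (by linarith) _
  have hK2 : (p + 1) ^ (1 / p) ≤ 2 := rpow_le_two_aux hp
  have hSpos : (0:ℝ) < 1 / ((3 * a + b) / 4 + 1) + 1 / ((a + 3 * b) / 4 + 1) := by
    have := one_div_pos.mpr h1pos
    have := one_div_pos.mpr h2pos
    linarith
  have hRpos : (0:ℝ) ≤ ((b - a) / (4 * (p + 1) ^ (1 / p))) *
      (1 / ((3 * a + b) / 4 + 1) + 1 / ((a + 3 * b) / 4 + 1)) := by
    apply mul_nonneg _ hSpos.le
    apply div_nonneg (by linarith)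
    positivity
  rw [abs_le]
  constructor
  · -- lower bound: the difference is nonnegative
    have hF := F_lower_aux c hc hcd.le
    have : 0 ≤ ((d - c) * Real.log ((c + d) / 2) - d * Real.log d + c * Real.log c
        + (d - c)) / (d - c) := div_nonneg hF hdc.le
    linarith
  · -- upper bound
    have hF := F_upper_aux c hc hcd.le
    have step1 : ((d - c) * Real.log ((c + d) / 2) - d * Real.log d + c * Real.log c
        + (d - c)) / (d - c)
        ≤ (2 * ((d - c) ^ 2 * (c + d)) / ((3 * c + d) * (c + 3 * d))) / (d - c) := by
      exact (div_le_div_iff_of_pos_right hdc).mpr hF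
    have step2 : (2 * ((d - c) ^ 2 * (c + d)) / ((3 * c + d) * (c + 3 * d))) / (d - c)
        = ((b - a) / 8) * (1 / ((3 * a + b) / 4 + 1) + 1 / ((a + 3 * b) / 4 + 1)) := by
      have e1 : (3 * a + b) / 4 + 1 = (3 * c + d) / 4 := by
        simp only [hc_def, hd_def]; ring
      have e2 : (a + 3 * b) / 4 + 1 = (c + 3 * d) / 4 := by
        simp only [hc_def, hd_def]; ring
      rw [e1, e2, ← hdcba]
      have hn1 : (3 * c + d) ≠ 0 := by positivity
      have hn2 : (c + 3 * d) ≠ 0 := by positivity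
      field_simp
      ring
    have step3 : ((b - a) / 8) * (1 / ((3 * a + b) / 4 + 1) + 1 / ((a + 3 * b) / 4 + 1))
        ≤ ((b - a) / (4 * (p + 1) ^ (1 / p))) *
          (1 / ((3 * a + b) / 4 + 1) + 1 / ((a + 3 * b) / 4 + 1)) := by
      apply mul_le_mul_of_nonneg_right _ hSpos.le
      have h4K : 4 * (p + 1) ^ (1 / p) ≤ 8 := by linarith
      have := div_le_div_of_nonneg_left (by linarith : (0:ℝ) ≤ b - a)
        (by positivity : (0:ℝ) < 4 * (p + 1) ^ (1 / p)) h4K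
      linarith
    calc ((d - c) * Real.log ((c + d) / 2) - d * Real.log d + c * Real.log c
        + (d - c)) / (d - c)
        ≤ (2 * ((d - c) ^ 2 * (c + d)) / ((3 * c + d) * (c + 3 * d))) / (d - c) := step1
      _ = ((b - a) / 8) * (1 / ((3 * a + b) / 4 + 1) + 1 / ((a + 3 * b) / 4 + 1)) := step2
      _ ≤ _ := step3
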